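/- arXiv:1311.5610 — 2 statements merged into one kernel-verified Lean document; each statement's English description precedes it below -/
import Mathlib

section
/- Pathwise, the diffusion-scaled flow vector satisfies D̂^n(t) = (I_{K²} + P_c(I−P')^{-1}B) Φ̃^n(t) + P_c(I−P')^{-1} Â^n(t) − P_c(I−P')^{-1} Q̂^n(t); in particular, D̂^n does not depend on the service-process fluctuation S̃^n except through the queue term Q̂^n. -/
open Matrix

/-- Lemma 3 of the paper (pathwise algebraic identity): combining the decomposition
`D̂_{i,j} = Φ̃_{i,j} + p_{i,j}(S̃ᵢ + μᵢ T̂ᵢ)` with the representation of `T̂` from the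
balance equation, the service fluctuations `S̃` cancel and
`D̂ = (I + P_c(I−P')⁻¹B)Φ̃ + P_c(I−P')⁻¹Â − P_c(I−P')⁻¹Q̂`, i.e. componentwise
`D̂_{i,j} = Φ̃_{i,j} + p_{i,j}·[(I−P')⁻¹(Â + BΦ̃ − Q̂)]ᵢ`. -/
theorem diffusion_scaled_flow_representation
    (K : ℕ) (P : Matrix (Fin K) (Fin K) ℝ)
    (hinv : IsUnit (1 - Pᵀ))
    (μser : Fin K → ℝ) (hμ : ∀ k, μser k ≠ 0)
    (Ahat Stilde That Qhat : Fin K → ℝ) (Φtilde Dhat : Fin K → Fin K → ℝ)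
    (hT : That = fun k =>
      ((Matrix.diagonal fun l => (μser l)⁻¹) * (1 - Pᵀ)⁻¹).mulVec
          (fun l => Ahat l + (∑ m, Φtilde m l) - (1 - Pᵀ).mulVec Stilde l) k
        - ((Matrix.diagonal fun l => (μser l)⁻¹) * (1 - Pᵀ)⁻¹).mulVec Qhat k)
    (hD : ∀ i j, Dhat i j = Φtilde i j + P i j * (Stilde i + μser i * That i)) :
    ∀ i j, Dhat i j =
      Φtilde i j +
        P i j * ((1 - Pᵀ)⁻¹.mulVec
          (fun l => Ahat l + (∑ m, Φtilde m l) - Qhat l) i) := by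
  intro i j
  have hdet := (Matrix.isUnit_iff_isUnit_det _).mp hinv
  set M := (1 - Pᵀ)⁻¹ with hM
  have hdiag : ∀ (v : Fin K → ℝ) (k : Fin K),
      ((Matrix.diagonal fun l => (μser l)⁻¹) * M).mulVec v k = (μser k)⁻¹ * M.mulVec v k := by
    intro v k
    rw [← Matrix.mulVec_mulVec, Matrix.mulVec_diagonal]
  set u : Fin K → ℝ := fun l => Ahat l + (∑ m, Φtilde m l) with hu
  have h1 : (fun l => Ahat l + (∑ m, Φtilde m l) - (1 - Pᵀ).mulVec Stilde l) = u - (1 - Pᵀ).mulVec Stilde := rfl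
  have h2 : (fun l => Ahat l + (∑ m, Φtilde m l) - Qhat l) = u - Qhat := rfl
  have hcancel : M.mulVec ((1 - Pᵀ).mulVec Stilde) = Stilde := by
    rw [Matrix.mulVec_mulVec, hM, Matrix.nonsing_inv_mul _ hdet, Matrix.one_mulVec]
  rw [hD, hT]
  simp only [hdiag, h1, h2, Matrix.mulVec_sub, hcancel, Pi.sub_apply]
  rw [← mul_sub, mul_inv_cancel_left₀ (hμ i)]
  ring
end

section
/- For the two-way Bernoulli split of a renewal-type counting process: if A(t) is a counting process with rate α and asymptotic variance parameter v² = lim Var(A(t))/t, and each arrival is independently routed to stream 1 with probability q and stream 2 with probability 1−q, then the asymptotic covariance of the two output streams is lim_{t→∞} Cov(D_1(t), D_2(t))/t = q(1−q)(v² − α), so the asymptotic correlation has the sign of v² − α. -/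
open MeasureTheory ProbabilityTheory Filter Finset

/-- Partition an integral over the fibers of an `ℕ`-valued random variable. -/
lemma part_integral {Ω : Type*} [MeasurableSpace Ω] (μ : Measure Ω) [IsProbabilityMeasure μ]
    (N : Ω → ℕ) (hN : Measurable N)
    (F : ℕ → Ω → ℝ) (φ : ℕ → ℝ)
    (hset : ∀ n, ∫ ω in {ω | N ω = n}, F n ω ∂μ = (μ {ω | N ω = n}).toReal * φ n)
    (hint1 : Integrable (fun ω => F (N ω) ω) μ)
    (hint2 : Integrable (fun ω => φ (N ω)) μ) :
    ∫ ω, F (N ω) ω ∂μ = ∫ ω, φ (N ω) ∂μ := by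
  set s : ℕ → Set Ω := fun n => {ω | N ω = n} with hs
  have hms : ∀ n, MeasurableSet (s n) := fun n => hN (measurableSet_singleton n)
  have hd : Pairwise (Function.onFun Disjoint s) := by
    intro i j hij
    simp only [Function.onFun, Set.disjoint_left]
    rintro ω hi hj
    exact hij ((show N ω = i from hi) ▸ (show N ω = j from hj))
  have hU : (⋃ n, s n) = Set.univ := by
    ext ω; simp [hs]
  have e1 : ∫ ω, F (N ω) ω ∂μ = ∑' n, ∫ ω in s n, F (N ω) ω ∂μ := by
    rw [← setIntegral_univ, ← hU, integral_iUnion hms hd (hU ▸ hint1.integrableOn)]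
  have e2 : ∫ ω, φ (N ω) ∂μ = ∑' n, ∫ ω in s n, φ (N ω) ∂μ := by
    rw [← setIntegral_univ, ← hU, integral_iUnion hms hd (hU ▸ hint2.integrableOn)]
  rw [e1, e2]
  congr 1; funext n
  have h1 : ∫ ω in s n, F (N ω) ω ∂μ = ∫ ω in s n, F n ω ∂μ :=
    setIntegral_congr_fun (hms n) (fun ω hω => by
      have : N ω = n := hω
      rw [this])
  have h2 : ∫ ω in s n, φ (N ω) ∂μ = (μ (s n)).toReal • φ n := by
    rw [setIntegral_congr_fun (hms n) (fun ω hω => by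
      have : N ω = n := hω
      show φ (N ω) = φ n
      rw [this]), setIntegral_const]
    rfl
  rw [h1, h2, hset n, smul_eq_mul]

/-- Asymptotic covariance of a Bernoulli split of a counting process: if `A(t)` has
rate `α` and asymptotic variance parameter `v²`, and each arrival is routed
independently to stream 1 with probability `q` (stream 2 otherwise), then
`Cov(D₁(t), D₂(t))/t → q(1−q)(v² − α)`. -/
theorem bernoulli_split_asymptotic_covariance
    {Ω : Type*} [MeasurableSpace Ω] (μ : Measure Ω) [IsProbabilityMeasure μ]
    (A : ℝ → Ω → ℕ) (hAmeas : ∀ t, Measurable (A t))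
    (B : ℕ → Ω → ℝ) (hBmeas : ∀ ℓ, Measurable (B ℓ))
    (q : ℝ) (hq0 : 0 ≤ q) (hq1 : q ≤ 1)
    (hB01 : ∀ ℓ, ∀ᵐ ω ∂μ, B ℓ ω = 0 ∨ B ℓ ω = 1)
    (hBq : ∀ ℓ, μ {ω | B ℓ ω = 1} = ENNReal.ofReal q)
    (hBiid : iIndepFun B μ)
    (hindep : IndepFun (fun ω => fun ℓ : ℕ => B ℓ ω) (fun ω => fun t : ℝ => A t ω) μ)
    (α v2 : ℝ)
    (hA2 : ∀ t, MemLp (fun ω => (A t ω : ℝ)) 2 μ)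
    (hmean : Tendsto (fun t : ℝ => (∫ ω, (A t ω : ℝ) ∂μ) / t) atTop (nhds α))
    (hvar : Tendsto (fun t : ℝ => variance (fun ω => (A t ω : ℝ)) μ / t) atTop (nhds v2)) :
    Tendsto (fun t : ℝ =>
        ((∫ ω, (∑ ℓ ∈ Finset.range (A t ω), B ℓ ω)
              * ((A t ω : ℝ) - ∑ ℓ ∈ Finset.range (A t ω), B ℓ ω) ∂μ)
          - (∫ ω, ∑ ℓ ∈ Finset.range (A t ω), B ℓ ω ∂μ)
            * (∫ ω, (A t ω : ℝ) - ∑ ℓ ∈ Finset.range (A t ω), B ℓ ω ∂μ)) / t)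
      atTop (nhds (q * (1 - q) * (v2 - α))) := by
  classical
  -- basic facts about the Bernoulli marks
  have hBae : ∀ᵐ ω ∂μ, ∀ ℓ, B ℓ ω = 0 ∨ B ℓ ω = 1 := ae_all_iff.2 hB01
  have hB2 : ∀ ℓ, MemLp (B ℓ) 2 μ := fun ℓ =>
    MemLp.of_bound (hBmeas ℓ).aestronglyMeasurable 1
      ((hB01 ℓ).mono (by rintro ω (h | h) <;> simp [h]))
  have hBint : ∀ ℓ, ∫ ω, B ℓ ω ∂μ = q := by
    intro ℓ
    have hms : MeasurableSet {ω | B ℓ ω = 1} := (hBmeas ℓ) (measurableSet_singleton 1)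
    have hae : (fun ω => B ℓ ω) =ᵐ[μ] Set.indicator {ω | B ℓ ω = 1} (fun _ => (1 : ℝ)) := by
      refine (hB01 ℓ).mono ?_
      rintro ω (h | h)
      · have : ω ∉ {ω | B ℓ ω = 1} := by simp [Set.mem_setOf_eq, h]
        simp [Set.indicator_of_notMem this, h]
      · have : ω ∈ {ω | B ℓ ω = 1} := h
        simp [Set.indicator_of_mem this, h]
    rw [integral_congr_ae hae, integral_indicator_const _ hms, measureReal_def, hBq ℓ, smul_eq_mul, mul_one,
      ENNReal.toReal_ofReal hq0]
  have hBsq : ∀ ℓ, ∫ ω, (B ℓ ω) ^ 2 ∂μ = q := by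
    intro ℓ
    have hae : (fun ω => (B ℓ ω) ^ 2) =ᵐ[μ] fun ω => B ℓ ω := by
      refine (hB01 ℓ).mono ?_
      rintro ω (h | h) <;> simp [h]
    rw [integral_congr_ae hae, hBint ℓ]
  have hBvar : ∀ ℓ, variance (B ℓ) μ = q - q ^ 2 := by
    intro ℓ
    rw [variance_eq_sub (hB2 ℓ)]
    simp only [Pi.pow_apply]
    rw [hBsq ℓ, hBint ℓ]
  -- facts about partial sums of the marks
  set S : ℕ → Ω → ℝ := fun n ω => ∑ ℓ ∈ Finset.range n, B ℓ ω with hSdef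
  have hSmeas : ∀ n, Measurable (S n) := fun n =>
    Finset.measurable_sum (Finset.range n) fun i _ => hBmeas i
  have hS2 : ∀ n, MemLp (S n) 2 μ := fun n =>
    memLp_finset_sum (Finset.range n) fun i _ => hB2 i
  have hSint : ∀ n, Integrable (S n) μ := fun n => (hS2 n).integrable one_le_two
  have hSsqint : ∀ n, Integrable (fun ω => S n ω ^ 2) μ := fun n => (hS2 n).integrable_sq
  have hSmean : ∀ n, ∫ ω, S n ω ∂μ = n * q := by
    intro n
    rw [hSdef]
    rw [integral_finset_sum (Finset.range n) fun i _ => (hB2 i).integrable one_le_two]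
    simp [hBint]
  have hSvar : ∀ n, variance (S n) μ = n * (q - q ^ 2) := by
    intro n
    have hfe : S n = ∑ i ∈ Finset.range n, B i := by
      funext ω; simp [hSdef]
    rw [hfe, IndepFun.variance_sum (fun i _ => hB2 i)
      (fun i _ j _ hij => hBiid.indepFun hij)]
    simp [hBvar, Finset.sum_const]
    ring
  have hSsq : ∀ n, ∫ ω, S n ω ^ 2 ∂μ = n * (q - q ^ 2) + (n * q) ^ 2 := by
    intro n
    have := variance_eq_sub (hS2 n)
    rw [hSvar n] at this
    have h1 : (μ[S n ^ 2] : ℝ) = ∫ ω, S n ω ^ 2 ∂μ := by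
      congr 1
    have h2 : (μ[S n] : ℝ) = n * q := hSmean n
    rw [h1, h2] at this
    linarith
  have hEF : ∀ n : ℕ, ∫ ω, S n ω * ((n : ℝ) - S n ω) ∂μ
      = q * (1 - q) * ((n : ℝ) ^ 2 - n) := by
    intro n
    have heq : (fun ω => S n ω * ((n : ℝ) - S n ω))
        = fun ω => (n : ℝ) * S n ω - S n ω ^ 2 := by
      funext ω; ring
    rw [heq, integral_sub ((hSint n).const_mul _) (hSsqint n), integral_const_mul,
      hSmean n, hSsq n]
    ring
  -- per-time covariance identity
  have key : ∀ t : ℝ,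
      ((∫ ω, (∑ ℓ ∈ Finset.range (A t ω), B ℓ ω)
            * ((A t ω : ℝ) - ∑ ℓ ∈ Finset.range (A t ω), B ℓ ω) ∂μ)
        - (∫ ω, ∑ ℓ ∈ Finset.range (A t ω), B ℓ ω ∂μ)
          * (∫ ω, (A t ω : ℝ) - ∑ ℓ ∈ Finset.range (A t ω), B ℓ ω ∂μ))
      = q * (1 - q) * (variance (fun ω => (A t ω : ℝ)) μ - ∫ ω, (A t ω : ℝ) ∂μ) := by
    intro t
    have hN : Measurable (A t) := hAmeas t
    have hNc : Measurable (fun ω => (A t ω : ℝ)) := measurable_from_top.comp hN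
    have hNint : Integrable (fun ω => (A t ω : ℝ)) μ := (hA2 t).integrable one_le_two
    have hNsq : Integrable (fun ω => ((A t ω : ℝ)) ^ 2) μ := (hA2 t).integrable_sq
    -- a.e. bounds on the partial sums
    have hSbd : ∀ᵐ ω ∂μ, ∀ n : ℕ, 0 ≤ S n ω ∧ S n ω ≤ n := by
      refine hBae.mono fun ω hω n => ⟨?_, ?_⟩
      · exact Finset.sum_nonneg fun i _ => by rcases hω i with h | h <;> simp [h]
      · calc S n ω ≤ ∑ _ℓ ∈ Finset.range n, (1 : ℝ) :=
              Finset.sum_le_sum fun i _ => by rcases hω i with h | h <;> simp [h]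
          _ = n := by simp
    -- measurability of the composed sum
    have hmS : Measurable (fun p : Ω × ℕ => S p.2 p.1) :=
      measurable_from_prod_countable_left fun n => hSmeas n
    have hDmeas : Measurable (fun ω => S (A t ω) ω) :=
      hmS.comp (measurable_id.prodMk hN)
    have hD1int : Integrable (fun ω => S (A t ω) ω) μ := by
      refine Integrable.mono' hNint hDmeas.aestronglyMeasurable ?_
      refine hSbd.mono fun ω hω => ?_
      rcases hω (A t ω) with ⟨h0, h1⟩
      rw [Real.norm_eq_abs, abs_of_nonneg h0]
      exact h1
    have hFcompint : Integrable (fun ω => S (A t ω) ω * ((A t ω : ℝ) - S (A t ω) ω)) μ := by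
      refine Integrable.mono' hNsq
        (hDmeas.mul (hNc.sub hDmeas)).aestronglyMeasurable ?_
      refine hSbd.mono fun ω hω => ?_
      rcases hω (A t ω) with ⟨h0, h1⟩
      rw [Real.norm_eq_abs, abs_mul]
      calc |S (A t ω) ω| * |(A t ω : ℝ) - S (A t ω) ω|
          ≤ (A t ω : ℝ) * (A t ω : ℝ) := by
            apply mul_le_mul
            · rw [abs_of_nonneg h0]; exact h1
            · rw [abs_of_nonneg (by linarith)]; linarith
            · exact abs_nonneg _
            · exact Nat.cast_nonneg _
        _ = ((A t ω : ℝ)) ^ 2 := by ring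
    -- independence: set-integral over fibers of A t factorizes
    have hIndepSet : ∀ (n : ℕ) (H : (ℕ → ℝ) → ℝ), Measurable H →
        Integrable (fun ω => H (fun ℓ => B ℓ ω)) μ →
        ∫ ω in {ω | A t ω = n}, H (fun ℓ => B ℓ ω) ∂μ
          = (μ {ω | A t ω = n}).toReal * ∫ ω, H (fun ℓ => B ℓ ω) ∂μ := by
      intro n H hH hHint
      set g : (ℝ → ℕ) → ℝ := Set.indicator {y : ℝ → ℕ | y t = n} (fun _ => 1) with hgdef
      have hgm : Measurable g :=
        measurable_const.indicator
          (show MeasurableSet {y : ℝ → ℕ | y t = n} by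
            have hev : Measurable fun y : ℝ → ℕ => y t := measurable_pi_apply t
            exact hev (measurableSet_singleton n))
      have hcomp : IndepFun (fun ω => g (fun u => A u ω)) (fun ω => H (fun ℓ => B ℓ ω)) μ :=
        (hindep.comp hH hgm).symm
      have hs : MeasurableSet {ω | A t ω = n} := hN (measurableSet_singleton n)
      have hgYeq : (fun ω => g (fun u => A u ω))
          = Set.indicator {ω | A t ω = n} (fun _ => (1 : ℝ)) := by
        funext ω
        by_cases h : A t ω = n
        · rw [Set.indicator_of_mem (show ω ∈ {ω | A t ω = n} from h),
            hgdef, Set.indicator_of_mem (show (fun u => A u ω) ∈ {y : ℝ → ℕ | y t = n} from h)]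
        · rw [Set.indicator_of_notMem (show ω ∉ {ω | A t ω = n} from h),
            hgdef,
            Set.indicator_of_notMem (show (fun u => A u ω) ∉ {y : ℝ → ℕ | y t = n} from h)]
      have hgint : Integrable (fun ω => g (fun u => A u ω)) μ := by
        rw [hgYeq]; exact (integrable_const (1 : ℝ)).indicator hs
      have hmul := hcomp.integral_mul_eq_mul_integral hgint.aestronglyMeasurable hHint.aestronglyMeasurable
      have hge : ∫ ω, g (fun u => A u ω) ∂μ = (μ {ω | A t ω = n}).toReal := by
        rw [hgYeq, integral_indicator_const _ hs, measureReal_def, smul_eq_mul, mul_one]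
      calc ∫ ω in {ω | A t ω = n}, H (fun ℓ => B ℓ ω) ∂μ
          = ∫ ω, Set.indicator {ω | A t ω = n} (fun ω' => H (fun ℓ => B ℓ ω')) ω ∂μ :=
            (integral_indicator hs).symm
        _ = ∫ ω, g (fun u => A u ω) * H (fun ℓ => B ℓ ω) ∂μ := by
            congr 1; funext ω
            by_cases h : A t ω = n
            · rw [Set.indicator_of_mem (show ω ∈ {ω | A t ω = n} from h),
                hgdef,
                Set.indicator_of_mem (show (fun u => A u ω) ∈ {y : ℝ → ℕ | y t = n} from h),
                one_mul]
            · rw [Set.indicator_of_notMem (show ω ∉ {ω | A t ω = n} from h),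
                hgdef,
                Set.indicator_of_notMem (show (fun u => A u ω) ∉ {y : ℝ → ℕ | y t = n} from h),
                zero_mul]
        _ = (∫ ω, g (fun u => A u ω) ∂μ) * ∫ ω, H (fun ℓ => B ℓ ω) ∂μ := by
            simpa [Pi.mul_apply] using hmul
        _ = (μ {ω | A t ω = n}).toReal * ∫ ω, H (fun ℓ => B ℓ ω) ∂μ := by rw [hge]
    -- conditioning identities
    have main1 : ∫ ω, S (A t ω) ω * ((A t ω : ℝ) - S (A t ω) ω) ∂μ
        = ∫ ω, q * (1 - q) * (((A t ω : ℝ)) ^ 2 - (A t ω : ℝ)) ∂μ := by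
      refine part_integral μ (A t) hN (fun n ω => S n ω * ((n : ℝ) - S n ω))
        (fun n => q * (1 - q) * ((n : ℝ) ^ 2 - n)) ?_ hFcompint ?_
      · intro n
        have hH : Measurable (fun x : ℕ → ℝ =>
            (∑ ℓ ∈ Finset.range n, x ℓ) * ((n : ℝ) - ∑ ℓ ∈ Finset.range n, x ℓ)) := by
          have hsum : Measurable (fun x : ℕ → ℝ => ∑ ℓ ∈ Finset.range n, x ℓ) :=
            Finset.measurable_sum (Finset.range n) fun i _ => measurable_pi_apply i
          exact hsum.mul (measurable_const.sub hsum)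
        have hHc : Integrable (fun ω =>
            (∑ ℓ ∈ Finset.range n, B ℓ ω) * ((n : ℝ) - ∑ ℓ ∈ Finset.range n, B ℓ ω)) μ := by
          have heq : (fun ω => (∑ ℓ ∈ Finset.range n, B ℓ ω)
              * ((n : ℝ) - ∑ ℓ ∈ Finset.range n, B ℓ ω))
              = fun ω => (n : ℝ) * S n ω - S n ω ^ 2 := by
            funext ω; simp only [hSdef]; ring
          rw [heq]
          exact ((hSint n).const_mul _).sub (hSsqint n)
        have := hIndepSet n (fun x =>
          (∑ ℓ ∈ Finset.range n, x ℓ) * ((n : ℝ) - ∑ ℓ ∈ Finset.range n, x ℓ)) hH hHc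
        simp only at this
        rw [show (∫ ω in {ω | A t ω = n}, S n ω * ((n : ℝ) - S n ω) ∂μ)
            = ∫ ω in {ω | A t ω = n},
                (∑ ℓ ∈ Finset.range n, B ℓ ω) * ((n : ℝ) - ∑ ℓ ∈ Finset.range n, B ℓ ω) ∂μ
          from rfl, this]
        congr 1
        exact hEF n
      · have heq : (fun ω => q * (1 - q) * (((A t ω : ℝ)) ^ 2 - (A t ω : ℝ)))
            = fun ω => q * (1 - q) * (((A t ω : ℝ)) ^ 2 - (A t ω : ℝ)) := rfl
        exact ((hNsq.sub hNint).const_mul _)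
    have main2 : ∫ ω, S (A t ω) ω ∂μ = ∫ ω, q * (A t ω : ℝ) ∂μ := by
      refine part_integral μ (A t) hN (fun n ω => S n ω) (fun n => q * (n : ℝ)) ?_ hD1int ?_
      · intro n
        have hH : Measurable (fun x : ℕ → ℝ => ∑ ℓ ∈ Finset.range n, x ℓ) :=
          Finset.measurable_sum (Finset.range n) fun i _ => measurable_pi_apply i
        have := hIndepSet n (fun x => ∑ ℓ ∈ Finset.range n, x ℓ) hH (hSint n)
        simp only at this
        rw [show (∫ ω in {ω | A t ω = n}, S n ω ∂μ)
            = ∫ ω in {ω | A t ω = n}, ∑ ℓ ∈ Finset.range n, B ℓ ω ∂μ from rfl, this,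
          hSmean n]
        ring
      · exact hNint.const_mul q
    -- put everything together
    have hND : Integrable (fun ω => (A t ω : ℝ) - S (A t ω) ω) μ := hNint.sub hD1int
    have hm1 : (∫ ω, (∑ ℓ ∈ Finset.range (A t ω), B ℓ ω)
          * ((A t ω : ℝ) - ∑ ℓ ∈ Finset.range (A t ω), B ℓ ω) ∂μ)
        = q * (1 - q) * ((∫ ω, ((A t ω : ℝ)) ^ 2 ∂μ) - ∫ ω, (A t ω : ℝ) ∂μ) := by
      rw [show (∫ ω, (∑ ℓ ∈ Finset.range (A t ω), B ℓ ω)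
          * ((A t ω : ℝ) - ∑ ℓ ∈ Finset.range (A t ω), B ℓ ω) ∂μ)
        = ∫ ω, S (A t ω) ω * ((A t ω : ℝ) - S (A t ω) ω) ∂μ from rfl, main1,
        integral_const_mul, integral_sub hNsq hNint]
    have hm2 : (∫ ω, ∑ ℓ ∈ Finset.range (A t ω), B ℓ ω ∂μ) = q * ∫ ω, (A t ω : ℝ) ∂μ := by
      rw [show (∫ ω, ∑ ℓ ∈ Finset.range (A t ω), B ℓ ω ∂μ)
        = ∫ ω, S (A t ω) ω ∂μ from rfl, main2, integral_const_mul]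
    have hm3 : (∫ ω, (A t ω : ℝ) - ∑ ℓ ∈ Finset.range (A t ω), B ℓ ω ∂μ)
        = (1 - q) * ∫ ω, (A t ω : ℝ) ∂μ := by
      rw [show (∫ ω, (A t ω : ℝ) - ∑ ℓ ∈ Finset.range (A t ω), B ℓ ω ∂μ)
        = ∫ ω, ((A t ω : ℝ) - S (A t ω) ω) ∂μ from rfl, integral_sub hNint hD1int, main2,
        integral_const_mul]
      ring
    have hvardef : variance (fun ω => (A t ω : ℝ)) μ
        = (∫ ω, ((A t ω : ℝ)) ^ 2 ∂μ) - (∫ ω, (A t ω : ℝ) ∂μ) ^ 2 := by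
      rw [variance_eq_sub (hA2 t)]
      rfl
    rw [hm1, hm2, hm3, hvardef]
    ring
  -- take the limit
  have hfun : (fun t : ℝ =>
        ((∫ ω, (∑ ℓ ∈ Finset.range (A t ω), B ℓ ω)
              * ((A t ω : ℝ) - ∑ ℓ ∈ Finset.range (A t ω), B ℓ ω) ∂μ)
          - (∫ ω, ∑ ℓ ∈ Finset.range (A t ω), B ℓ ω ∂μ)
            * (∫ ω, (A t ω : ℝ) - ∑ ℓ ∈ Finset.range (A t ω), B ℓ ω ∂μ)) / t)
      = fun t : ℝ => q * (1 - q) *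
          (variance (fun ω => (A t ω : ℝ)) μ / t - (∫ ω, (A t ω : ℝ) ∂μ) / t) := by
    funext t
    rw [key t]
    ring
  rw [hfun]
  exact (hvar.sub hmean).const_mul (q * (1 - q))
end
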